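/- Let a ∈ (0,3/10]. Then: (i) for every p ∈ (0, a⁻¹), the function y ↦ [ g_a(2ap/y − a) − g_a((2−2ap)/y + a) ]·y⁻³ is integrable on (p,∞) and ∫_p^∞ [ g_a(2ap/y − a) − g_a((2−2ap)/y + a) ]·y⁻³ dy < 0; (ii) the function y ↦ [ g_a(2/y − a) − g_a(a) ]·y⁻³ is integrable on (a⁻¹, ∞) and ∫_{a⁻¹}^∞ [ g_a(2/y − a) − g_a(a) ]·y⁻³ dy = 0. -/

import Mathlib

open MeasureTheory Set
open Filter Topology

/-- `g_a(s) := (2s³ + 3A·s² − 6s − A)/(1 + s²)³` with `A := a⁻¹ − a`. -/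
noncomputable def gfun (a s : ℝ) : ℝ :=
  (2 * s ^ 3 + 3 * (a⁻¹ - a) * s ^ 2 - 6 * s - (a⁻¹ - a)) / (1 + s ^ 2) ^ 3

/-- Antiderivative building block. -/
noncomputable def phiA (A b u : ℝ) : ℝ :=
  ((-2) * u ^ 3 + ((-b) - 3 / 2 * A) * u ^ 2 + (-A * b) * u + (b - A / 2)) / (1 + u ^ 2) ^ 2

lemma hasDerivAt_phiA (A b u : ℝ) :
    HasDerivAt (phiA A b)
      ((2 * u ^ 3 + 3 * A * u ^ 2 - 6 * u - A) / (1 + u ^ 2) ^ 3 * (u + b)) u := by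
  have h0 : ((1 : ℝ) + u ^ 2) ^ 2 ≠ 0 := by positivity
  have h0' : ((1 : ℝ) + u ^ 2) ≠ 0 := by positivity
  have hnum : HasDerivAt (fun x : ℝ => (-2) * x ^ 3 + ((-b) - 3 / 2 * A) * x ^ 2
      + (-A * b) * x + (b - A / 2))
      ((-2) * (3 * u ^ 2) + ((-b) - 3 / 2 * A) * (2 * u) + (-A * b) * 1) u := by
    have h3 : HasDerivAt (fun x : ℝ => x ^ 3) (3 * u ^ 2) u := by
      simpa using hasDerivAt_pow 3 u
    have h2 : HasDerivAt (fun x : ℝ => x ^ 2) (2 * u) u := by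
      simpa using hasDerivAt_pow 2 u
    have h1 : HasDerivAt (fun x : ℝ => x) (1 : ℝ) u := hasDerivAt_id u
    exact (((h3.const_mul (-2 : ℝ)).add (h2.const_mul _)).add (h1.const_mul _)).add_const _
  have hden : HasDerivAt (fun x : ℝ => (1 + x ^ 2) ^ 2)
      (2 * (1 + u ^ 2) ^ 1 * (2 * u)) u := by
    have h2 : HasDerivAt (fun x : ℝ => 1 + x ^ 2) (2 * u) u := by
      simpa using (hasDerivAt_pow 2 u).const_add 1
    exact h2.pow 2
  have := hnum.div hden h0
  refine this.congr_deriv ?_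
  field_simp
  ring

lemma continuous_gfun (a : ℝ) : Continuous (gfun a) := by
  unfold gfun
  exact Continuous.div (by continuity) (by continuity) (fun x => by positivity)

lemma gfun_abs_le (a s : ℝ) : |gfun a s| ≤ 8 + 4 * |a⁻¹ - a| := by
  have h1 : (0 : ℝ) < (1 + s ^ 2) ^ 3 := by positivity
  rw [gfun, abs_div, abs_of_pos h1, div_le_iff₀ h1]
  have habs : |s| ≤ 1 + s ^ 2 := by nlinarith [sq_abs s, abs_nonneg s]
  have h2 : (1 : ℝ) ≤ (1 + s ^ 2) ^ 3 := one_le_pow₀ (by nlinarith [sq_nonneg s])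
  have h3 : |s| ^ 3 ≤ (1 + s ^ 2) ^ 3 := pow_le_pow_left₀ (abs_nonneg s) habs 3
  have h4 : s ^ 2 ≤ (1 + s ^ 2) ^ 3 := by nlinarith [sq_nonneg s, sq_nonneg (s^2), pow_pos (show (0:ℝ) < 1 + s^2 by positivity) 3]
  have h5 : |s| ≤ (1 + s ^ 2) ^ 3 := habs.trans (by nlinarith [sq_nonneg s, sq_nonneg (s^2)])
  have hA1 := le_abs_self (a⁻¹ - a)
  have hA2 := neg_abs_le (a⁻¹ - a)
  have hA0 := abs_nonneg (a⁻¹ - a)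
  have hs3a : s ^ 3 ≤ |s| ^ 3 := by
    rw [← abs_pow]; exact le_abs_self _
  have hs3b : -(|s| ^ 3) ≤ s ^ 3 := by
    rw [← abs_pow]; exact neg_abs_le _
  have hsa := le_abs_self s
  have hsb := neg_abs_le s
  have hsq := sq_nonneg s
  rw [abs_le]
  constructor
  · nlinarith [mul_le_mul_of_nonneg_right hA1 hsq, mul_le_mul_of_nonneg_right hA2 hsq,
      mul_le_mul_of_nonneg_left (sub_nonneg.2 h4) hA0,
      mul_le_mul_of_nonneg_left (sub_nonneg.2 h2) hA0]
  · nlinarith [mul_le_mul_of_nonneg_right hA1 hsq, mul_le_mul_of_nonneg_right hA2 hsq,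
      mul_le_mul_of_nonneg_left (sub_nonneg.2 h4) hA0,
      mul_le_mul_of_nonneg_left (sub_nonneg.2 h2) hA0]

lemma integrableOn_aux (a p : ℝ) (hp : 0 < p) (s₁ s₂ : ℝ → ℝ)
    (hs₁ : ContinuousOn s₁ (Ioi p)) (hs₂ : ContinuousOn s₂ (Ioi p)) :
    IntegrableOn (fun y => (gfun a (s₁ y) - gfun a (s₂ y)) / y ^ 3) (Ioi p) := by
  set C : ℝ := 8 + 4 * |a⁻¹ - a| with hC
  have hCpos : 0 < C := by positivity
  refine Integrable.mono'
    (((integrableOn_Ioi_rpow_of_lt (show (-3:ℝ) < -1 by norm_num) hp)).const_mul (2 * C)) ?_ ?_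
  · refine ContinuousOn.aestronglyMeasurable ?_ measurableSet_Ioi
    refine ContinuousOn.div
      (((continuous_gfun a).comp_continuousOn hs₁).sub
        ((continuous_gfun a).comp_continuousOn hs₂))
      ((continuous_pow 3).continuousOn) ?_
    intro y hy
    exact pow_ne_zero _ (ne_of_gt (hp.trans hy))
  · rw [ae_restrict_iff' measurableSet_Ioi]
    filter_upwards with y hy
    have hy0 : 0 < y := hp.trans hy
    have hy3 : (0:ℝ) < y ^ 3 := by positivity
    have hrw : y ^ (-3 : ℝ) = (y ^ 3)⁻¹ := by
      rw [← Real.rpow_natCast y 3, ← Real.rpow_neg hy0.le]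
      norm_num
    rw [Real.norm_eq_abs, abs_div, abs_of_pos hy3, hrw, mul_comm (2*C), inv_mul_eq_div]
    rw [div_le_div_iff_of_pos_right hy3]
    calc |gfun a (s₁ y) - gfun a (s₂ y)| ≤ |gfun a (s₁ y)| + |gfun a (s₂ y)| := abs_sub _ _
      _ ≤ C + C := add_le_add (gfun_abs_le a _) (gfun_abs_le a _)
      _ = 2 * C := by ring

lemma key_ineq (a p t : ℝ) (ha : 0 < a) (hp : 0 < p) (ht : a < t)
    (hd : 2 - 2 * a * p = p * (t - a)) :
    (-phiA (a⁻¹ - a) a (-a) / (2 * a * p) ^ 2 + phiA (a⁻¹ - a) (-a) a / (2 - 2 * a * p) ^ 2)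
      - (-phiA (a⁻¹ - a) a a / (2 * a * p) ^ 2
          + phiA (a⁻¹ - a) (-a) t / (2 - 2 * a * p) ^ 2) < 0 := by
  rw [hd]
  have ha' : a ≠ 0 := ha.ne'
  have hp' : p ≠ 0 := hp.ne'
  have hta : t - a ≠ 0 := (sub_pos.2 ht).ne'
  have h1 : (1 : ℝ) + a ^ 2 ≠ 0 := by positivity
  have h1' : (1 : ℝ) + (-a) ^ 2 ≠ 0 := by positivity
  have h2 : (1 : ℝ) + t ^ 2 ≠ 0 := by positivity
  have ht0 : 0 < t := ha.trans ht
  have hEq : (-phiA (a⁻¹ - a) a (-a) / (2 * a * p) ^ 2 + phiA (a⁻¹ - a) (-a) a / (p * (t - a)) ^ 2)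
      - (-phiA (a⁻¹ - a) a a / (2 * a * p) ^ 2 + phiA (a⁻¹ - a) (-a) t / (p * (t - a)) ^ 2)
      = -((t - a) * (t ^ 3 + a * t ^ 2 + (2 * a ^ 2 + 3) * t + a))
          / (2 * a * (1 + a ^ 2) * (1 + t ^ 2) ^ 2 * p ^ 2) := by
    simp only [phiA]
    field_simp
    ring
  rw [hEq]
  apply div_neg_of_neg_of_pos
  · have hcub : 0 < t ^ 3 + a * t ^ 2 + (2 * a ^ 2 + 3) * t + a := by
      nlinarith [pow_pos ht0 3, mul_pos ha (pow_pos ht0 2),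
        mul_nonneg (mul_nonneg (by norm_num : (0:ℝ) ≤ 2) (sq_nonneg a)) ht0.le]
    nlinarith [mul_pos (sub_pos.2 ht) hcub]
  · have hx1 : (0:ℝ) < 2 * a := by linarith
    have hx2 : (0:ℝ) < 1 + a ^ 2 := by positivity
    have hx3 : (0:ℝ) < (1 + t ^ 2) ^ 2 := by positivity
    have hx4 : (0:ℝ) < p ^ 2 := pow_pos hp 2
    exact mul_pos (mul_pos (mul_pos hx1 hx2) hx3) hx4

lemma hasDerivAt_phiA' (a b u : ℝ) :
    HasDerivAt (phiA (a⁻¹ - a) b) (gfun a u * (u + b)) u :=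
  hasDerivAt_phiA (a⁻¹ - a) b u

/-- For `a ∈ (0, 3/10]`:
(i) for every `p ∈ (0, a⁻¹)`, `y ↦ [g_a(2ap/y − a) − g_a((2−2ap)/y + a)]/y³` is integrable on
`(p,∞)` with negative integral; (ii) `y ↦ [g_a(2/y − a) − g_a(a)]/y³` is integrable on
`(a⁻¹,∞)` with integral `0`. -/
theorem gfun_tail_integrals (a : ℝ) (ha : 0 < a) (ha' : a ≤ 3 / 10) :
    (∀ p : ℝ, 0 < p → p < a⁻¹ →
      IntegrableOn
        (fun y : ℝ => (gfun a (2 * a * p / y - a) - gfun a ((2 - 2 * a * p) / y + a)) / y ^ 3)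
        (Ioi p) ∧
      (∫ y in Ioi p,
        (gfun a (2 * a * p / y - a) - gfun a ((2 - 2 * a * p) / y + a)) / y ^ 3) < 0) ∧
    (IntegrableOn (fun y : ℝ => (gfun a (2 / y - a) - gfun a a) / y ^ 3) (Ioi a⁻¹) ∧
      (∫ y in Ioi a⁻¹, (gfun a (2 / y - a) - gfun a a) / y ^ 3) = 0) := by
  have ha0 : a ≠ 0 := ha.ne'
  constructor
  · intro p hp0 hp1
    have hap : a * p < 1 := by
      have h := mul_lt_mul_of_pos_left hp1 ha
      rwa [mul_inv_cancel₀ ha0] at h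
    have hc : (0:ℝ) < 2 * a * p := by nlinarith
    have hd : (0:ℝ) < 2 - 2 * a * p := by nlinarith
    set c : ℝ := 2 * a * p with hcdef
    set d : ℝ := 2 - 2 * a * p with hddef
    set F : ℝ → ℝ := fun y =>
      -phiA (a⁻¹ - a) a (c / y - a) / c ^ 2 + phiA (a⁻¹ - a) (-a) (d / y + a) / d ^ 2
      with hFdef
    have hderiv : ∀ y : ℝ, 0 < y →
        HasDerivAt F ((gfun a (c / y - a) - gfun a (d / y + a)) / y ^ 3) y := by
      intro y hy
      have hy' : y ≠ 0 := hy.ne'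
      have h1 : HasDerivAt (fun y : ℝ => c / y - a) (c * -(y ^ 2)⁻¹) y := by
        simpa [div_eq_mul_inv] using ((hasDerivAt_inv hy').const_mul c).sub_const a
      have h2 : HasDerivAt (fun y : ℝ => d / y + a) (d * -(y ^ 2)⁻¹) y := by
        simpa [div_eq_mul_inv] using ((hasDerivAt_inv hy').const_mul d).add_const a
      have hPhi := (hasDerivAt_phiA' a a (c / y - a)).comp y h1
      have hPsi := (hasDerivAt_phiA' a (-a) (d / y + a)).comp y h2
      have hF := ((hPhi.neg).div_const (c ^ 2)).add (hPsi.div_const (d ^ 2))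
      have hF' : HasDerivAt F (-(gfun a (c / y - a) * (c / y - a + a) * (c * -(y ^ 2)⁻¹)) / c ^ 2
          + gfun a (d / y + a) * (d / y + a + -a) * (d * -(y ^ 2)⁻¹) / d ^ 2) y := hF
      convert hF' using 1
      field_simp
      ring
    have hcont : ContinuousWithinAt F (Ici p) p :=
      (hderiv p hp0).continuousAt.continuousWithinAt
    have hint : IntegrableOn (fun y : ℝ => (gfun a (c / y - a) - gfun a (d / y + a)) / y ^ 3)
        (Ioi p) := by
      exact integrableOn_aux a p hp0 _ _
        ((continuousOn_const.div continuousOn_id fun y hy => (hp0.trans hy).ne').sub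
          continuousOn_const)
        ((continuousOn_const.div continuousOn_id fun y hy => (hp0.trans hy).ne').add
          continuousOn_const)
    have hu : Tendsto (fun y : ℝ => c / y - a) atTop (𝓝 (-a)) := by
      simpa using (Filter.Tendsto.const_div_atTop tendsto_id c).sub_const a
    have hv : Tendsto (fun y : ℝ => d / y + a) atTop (𝓝 a) := by
      simpa using (Filter.Tendsto.const_div_atTop tendsto_id d).add_const a
    have hm : Tendsto F atTop
        (𝓝 (-phiA (a⁻¹ - a) a (-a) / c ^ 2 + phiA (a⁻¹ - a) (-a) a / d ^ 2)) := by
      exact ((((hasDerivAt_phiA' a a (-a)).continuousAt.tendsto.comp hu).neg).div_const _).add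
        (((hasDerivAt_phiA' a (-a) a).continuousAt.tendsto.comp hv).div_const _)
    refine ⟨hint, ?_⟩
    rw [integral_Ioi_of_hasDerivAt_of_tendsto hcont
      (fun y hy => hderiv y (hp0.trans hy)) hint hm]
    have hcp : c / p - a = a := by
      rw [hcdef]; field_simp; ring
    have hdp : d / p + a = 2 / p - a := by
      rw [hddef]; field_simp; ring
    have hFp : F p = -phiA (a⁻¹ - a) a a / c ^ 2
        + phiA (a⁻¹ - a) (-a) (2 / p - a) / d ^ 2 := by
      simp only [hFdef]
      rw [hcp, hdp]
    rw [hFp]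
    have ht : a < 2 / p - a := by
      rw [lt_sub_iff_add_lt, lt_div_iff₀ hp0]
      nlinarith
    have hd2 : 2 - 2 * a * p = p * ((2 / p - a) - a) := by
      field_simp
      ring
    exact key_ineq a p (2 / p - a) ha hp0 ht hd2
  · set F : ℝ → ℝ := fun y =>
      -phiA (a⁻¹ - a) a (2 / y - a) / (2:ℝ) ^ 2 + gfun a a / 2 * (y ^ 2)⁻¹ with hFdef
    have hainv : (0:ℝ) < a⁻¹ := inv_pos.2 ha
    have hderiv : ∀ y : ℝ, 0 < y →
        HasDerivAt F ((gfun a (2 / y - a) - gfun a a) / y ^ 3) y := by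
      intro y hy
      have hy' : y ≠ 0 := hy.ne'
      have h1 : HasDerivAt (fun y : ℝ => 2 / y - a) ((2:ℝ) * -(y ^ 2)⁻¹) y := by
        simpa [div_eq_mul_inv] using ((hasDerivAt_inv hy').const_mul (2:ℝ)).sub_const a
      have hPhi := (hasDerivAt_phiA' a a (2 / y - a)).comp y h1
      have hsec := ((hasDerivAt_pow 2 y).inv (pow_ne_zero 2 hy')).const_mul (gfun a a / 2)
      have hF := ((hPhi.neg).div_const ((2:ℝ) ^ 2)).add hsec
      have hF' : HasDerivAt F (-(gfun a (2 / y - a) * (2 / y - a + a) * ((2:ℝ) * -(y ^ 2)⁻¹)) / (2:ℝ) ^ 2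
          + gfun a a / 2 * (-(↑2 * y ^ 1) / (y ^ 2) ^ 2)) y := hF
      convert hF' using 1
      field_simp
      ring
    have hcont : ContinuousWithinAt F (Ici a⁻¹) a⁻¹ :=
      (hderiv a⁻¹ hainv).continuousAt.continuousWithinAt
    have hint : IntegrableOn (fun y : ℝ => (gfun a (2 / y - a) - gfun a a) / y ^ 3)
        (Ioi a⁻¹) := by
      exact integrableOn_aux a a⁻¹ hainv _ _
        ((continuousOn_const.div continuousOn_id fun y hy => (hainv.trans hy).ne').sub
          continuousOn_const)
        continuousOn_const
    have hu : Tendsto (fun y : ℝ => 2 / y - a) atTop (𝓝 (-a)) := by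
      simpa using (Filter.Tendsto.const_div_atTop tendsto_id (2:ℝ)).sub_const a
    have hsec0 : Tendsto (fun y : ℝ => (y ^ 2)⁻¹) atTop (𝓝 0) := by
      have h : Tendsto (fun y : ℝ => y ^ 2) atTop atTop := tendsto_pow_atTop (by norm_num)
      exact h.inv_tendsto_atTop
    have hm : Tendsto F atTop
        (𝓝 (-phiA (a⁻¹ - a) a (-a) / (2:ℝ) ^ 2 + gfun a a / 2 * 0)) := by
      exact ((((hasDerivAt_phiA' a a (-a)).continuousAt.tendsto.comp hu).neg).div_const _).add
        (hsec0.const_mul (gfun a a / 2))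
    refine ⟨hint, ?_⟩
    rw [integral_Ioi_of_hasDerivAt_of_tendsto hcont
      (fun y hy => hderiv y (hainv.trans hy)) hint hm]
    have h2a : 2 / (a⁻¹ : ℝ) - a = a := by
      rw [div_inv_eq_mul]; ring
    simp only [hFdef]
    rw [h2a]
    have h1 : (1:ℝ) + a ^ 2 ≠ 0 := by positivity
    have h1' : (1:ℝ) + (-a) ^ 2 ≠ 0 := by positivity
    simp only [phiA, gfun]
    field_simp
    ring
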